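/- Every focal equilibrium of an oligopoly pricing game is efficient: if ((B_i),(f_i^*)) is an equilibrium satisfying the replicating condition B_i(t) = B_{î}(R_s) − B_{î}(R_s − t) for all t ∈ [0, f_i^*] and every relay i, then (f_i^*) is the socially optimal routing. -/

import Mathlib

open Finset MeasureTheory intervalIntegral Set

/-- Virtual-competitor cost function: the minimal total cost of splitting traffic `t`
among the relays other than `i`, given pricing functions `B`. -/
noncomputable def Bhat (N : ℕ) (B : Fin N → ℝ → ℝ) (i : Fin N) (t : ℝ) : ℝ :=
  sInf {c : ℝ | ∃ g : Fin N → ℝ, (∀ j, 0 ≤ g j) ∧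
    (∑ j ∈ Finset.univ.erase i, g j) = t ∧ c = ∑ j ∈ Finset.univ.erase i, B j (g j)}

/-- A routing of total rate `Rs` among `N` relays. -/
def IsRouting (N : ℕ) (Rs : ℝ) (f : Fin N → ℝ) : Prop :=
  (∀ i, 0 ≤ f i) ∧ (∑ i, f i) = Rs

/-- The network cost of a routing. -/
noncomputable def totalCost (N : ℕ) (lam : Fin N → ℝ → ℝ) (f : Fin N → ℝ) : ℝ :=
  ∑ i, ∫ r in (0:ℝ)..(f i), lam i r

/-- The socially optimal routing: a routing of minimum cost. -/
def IsSociallyOptimal (N : ℕ) (Rs : ℝ) (lam : Fin N → ℝ → ℝ) (f : Fin N → ℝ) : Prop :=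
  IsRouting N Rs f ∧ ∀ g, IsRouting N Rs g → totalCost N lam f ≤ totalCost N lam g

/-- An oligopoly pricing game: at least two relays, positive rate, and marginal cost
functions that are positive, continuous and strictly increasing on `[0, Rs]`. -/
def IsOligopoly (N : ℕ) (Rs : ℝ) (lam : Fin N → ℝ → ℝ) : Prop :=
  2 ≤ N ∧ 0 < Rs ∧ ∀ i,
    (∀ t ∈ Set.Icc (0:ℝ) Rs, 0 < lam i t) ∧
    ContinuousOn (lam i) (Set.Icc 0 Rs) ∧
    StrictMonoOn (lam i) (Set.Icc 0 Rs)

/-- A pricing profile: each relay's pricing function is continuous, nondecreasing,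
and vanishes at `0`. -/
def IsPricingProfile (N : ℕ) (Rs : ℝ) (B : Fin N → ℝ → ℝ) : Prop :=
  ∀ i, ContinuousOn (B i) (Set.Icc 0 Rs) ∧ MonotoneOn (B i) (Set.Icc 0 Rs) ∧ B i 0 = 0

/-- Equilibrium of the oligopoly pricing game. -/
def IsEquilibrium (N : ℕ) (Rs : ℝ) (lam B : Fin N → ℝ → ℝ) (f : Fin N → ℝ) : Prop :=
  IsPricingProfile N Rs B ∧ IsRouting N Rs f ∧
  (∀ g, IsRouting N Rs g → (∑ i, B i (f i)) ≤ ∑ i, B i (g i)) ∧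
  (∀ i, ∀ t ∈ Set.Icc (0:ℝ) Rs, Bhat N B i Rs - Bhat N B i (Rs - t) ≤ B i t) ∧
  (∀ i, B i (f i) = Bhat N B i Rs - Bhat N B i (Rs - f i)) ∧
  (∀ i, ∀ t ∈ Set.Icc (0:ℝ) Rs,
    Bhat N B i Rs - Bhat N B i (Rs - t) - (∫ r in (0:ℝ)..t, lam i r) ≤
    Bhat N B i Rs - Bhat N B i (Rs - f i) - ∫ r in (0:ℝ)..(f i), lam i r)

/-- A function having one-sided derivatives: a right derivative at every point of
`[0, Rs)` and a left derivative at every point of `(0, Rs]`. -/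
def HasOneSidedDerivs (Rs : ℝ) (F : ℝ → ℝ) : Prop :=
  (∀ t ∈ Set.Ico (0:ℝ) Rs, ∃ d, HasDerivWithinAt F d (Set.Ici t) t) ∧
  (∀ t ∈ Set.Ioc (0:ℝ) Rs, ∃ d, HasDerivWithinAt F d (Set.Iic t) t)

/-- Every focal equilibrium of an oligopoly pricing game is efficient. -/
theorem focal_equilibrium_efficient
    (N : ℕ) (Rs : ℝ) (lam B : Fin N → ℝ → ℝ) (f : Fin N → ℝ)
    (holig : IsOligopoly N Rs lam)
    (heq : IsEquilibrium N Rs lam B f)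
    (hfocal : ∀ i, ∀ t ∈ Set.Icc 0 (f i),
      B i t = Bhat N B i Rs - Bhat N B i (Rs - t))
    (hderivB : ∀ i, HasOneSidedDerivs Rs (B i))
    (hderivBhat : ∀ i, HasOneSidedDerivs Rs (Bhat N B i)) :
    IsSociallyOptimal N Rs lam f := by
  classical
  obtain ⟨hN, hRs, hlam⟩ := holig
  obtain ⟨hprice, hrout, hmin, hge, heqB, hmax⟩ := heq
  obtain ⟨hf0, hfsum⟩ := hrout
  have hfRs : ∀ i, f i ≤ Rs := by
    intro i
    rw [← hfsum]
    exact Finset.single_le_sum (fun j _ => hf0 j) (Finset.mem_univ i)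
  have hfIcc : ∀ i, f i ∈ Set.Icc (0:ℝ) Rs := fun i => ⟨hf0 i, hfRs i⟩
  -- integrability of the marginal costs on subintervals of [0, Rs]
  have hint : ∀ (i : Fin N) (a b : ℝ), a ∈ Set.Icc (0:ℝ) Rs → b ∈ Set.Icc (0:ℝ) Rs →
      IntervalIntegrable (lam i) volume a b := by
    intro i a b ha hb
    exact ((hlam i).2.1.mono (Set.uIcc_subset_Icc ha hb)).intervalIntegrable
  -- upper and lower bounds on integrals via monotonicity
  have hIub : ∀ (i : Fin N) (a b : ℝ), 0 ≤ a → a ≤ b → b ≤ Rs →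
      (∫ r in a..b, lam i r) ≤ lam i b * (b - a) := by
    intro i a b ha hab hb
    have haI : a ∈ Set.Icc (0:ℝ) Rs := ⟨ha, le_trans hab hb⟩
    have hbI : b ∈ Set.Icc (0:ℝ) Rs := ⟨le_trans ha hab, hb⟩
    have h1 : (∫ r in a..b, lam i r) ≤ ∫ _r in a..b, lam i b := by
      apply intervalIntegral.integral_mono_on hab (hint i a b haI hbI)
        intervalIntegrable_const
      intro x hx
      exact ((hlam i).2.2.monotoneOn) ⟨le_trans ha hx.1, le_trans hx.2 hb⟩ hbI hx.2
    simpa [mul_comm] using h1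
  have hIlb : ∀ (i : Fin N) (a b : ℝ), 0 ≤ a → a ≤ b → b ≤ Rs →
      lam i a * (b - a) ≤ ∫ r in a..b, lam i r := by
    intro i a b ha hab hb
    have haI : a ∈ Set.Icc (0:ℝ) Rs := ⟨ha, le_trans hab hb⟩
    have hbI : b ∈ Set.Icc (0:ℝ) Rs := ⟨le_trans ha hab, hb⟩
    have h1 : (∫ _r in a..b, lam i a) ≤ ∫ r in a..b, lam i r := by
      apply intervalIntegral.integral_mono_on hab intervalIntegrable_const
        (hint i a b haI hbI)
      intro x hx
      exact ((hlam i).2.2.monotoneOn) haI ⟨le_trans ha hx.1, le_trans hx.2 hb⟩ hx.1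
    simpa [mul_comm] using h1
  -- basic sums
  have hsum_erase_f : ∀ j : Fin N, ∑ k ∈ Finset.univ.erase j, f k = Rs - f j := by
    intro j
    have := Finset.add_sum_erase Finset.univ f (Finset.mem_univ j)
    rw [hfsum] at this
    linarith
  have hpair : ∀ i j : Fin N, i ≠ j → f i + f j ≤ Rs := by
    intro i j hij
    have h1 : f i ≤ ∑ k ∈ Finset.univ.erase j, f k :=
      Finset.single_le_sum (fun k _ => hf0 k)
        (Finset.mem_erase.mpr ⟨hij, Finset.mem_univ i⟩)
    have := hsum_erase_f j
    linarith
  -- Bhat facts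
  have hBS_nonneg : ∀ (j : Fin N) (t : ℝ), 0 ≤ t → t ≤ Rs →
      ∀ c ∈ {c : ℝ | ∃ g : Fin N → ℝ, (∀ k, 0 ≤ g k) ∧
        (∑ k ∈ Finset.univ.erase j, g k) = t ∧ c = ∑ k ∈ Finset.univ.erase j, B k (g k)},
      0 ≤ c := by
    intro j t ht htRs c hc
    obtain ⟨g, hg0, hgs, rfl⟩ := hc
    apply Finset.sum_nonneg
    intro k hk
    have hgk_le : g k ≤ t := by
      rw [← hgs]
      exact Finset.single_le_sum (fun l _ => hg0 l) hk
    have h0 : (0:ℝ) ∈ Set.Icc (0:ℝ) Rs := ⟨le_refl 0, le_of_lt hRs⟩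
    have hgkI : g k ∈ Set.Icc (0:ℝ) Rs := ⟨hg0 k, le_trans hgk_le htRs⟩
    have := (hprice k).2.1 h0 hgkI (hg0 k)
    rw [(hprice k).2.2] at this
    exact this
  have hBhat_le : ∀ (j : Fin N) (t : ℝ) (g : Fin N → ℝ), (∀ k, 0 ≤ g k) →
      (∑ k ∈ Finset.univ.erase j, g k) = t → 0 ≤ t → t ≤ Rs →
      Bhat N B j t ≤ ∑ k ∈ Finset.univ.erase j, B k (g k) := by
    intro j t g hg0 hgs ht htRs
    apply csInf_le
    · exact ⟨0, fun c hc => hBS_nonneg j t ht htRs c hc⟩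
    · exact ⟨g, hg0, hgs, rfl⟩
  have hBhat_ge : ∀ j : Fin N,
      (∑ k ∈ Finset.univ.erase j, B k (f k)) ≤ Bhat N B j (Rs - f j) := by
    intro j
    apply le_csInf
    · exact ⟨∑ k ∈ Finset.univ.erase j, B k (f k), f, hf0, hsum_erase_f j, rfl⟩
    · rintro c ⟨g, hg0, hgs, rfl⟩
      set g' := Function.update g j (f j) with hg'
      have hg'0 : ∀ k, 0 ≤ g' k := by
        intro k
        rcases eq_or_ne k j with rfl | hk
        · simp only [hg', Function.update_self]; exact hf0 _
        · rw [hg', Function.update_of_ne hk]; exact hg0 k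
      have hg'sum : ∑ k, g' k = Rs := by
        rw [← Finset.add_sum_erase Finset.univ g' (Finset.mem_univ j)]
        have h1 : g' j = f j := by simp [hg']
        have h2 : ∑ k ∈ Finset.univ.erase j, g' k = ∑ k ∈ Finset.univ.erase j, g k := by
          apply Finset.sum_congr rfl
          intro k hk
          exact congrArg g' rfl ▸ (by rw [hg', Function.update_of_ne (Finset.mem_erase.mp hk).1])
        rw [h1, h2, hgs]; ring
      have hroute := hmin g' ⟨hg'0, hg'sum⟩
      have hsplit_f : ∑ k, B k (f k)
          = B j (f j) + ∑ k ∈ Finset.univ.erase j, B k (f k) :=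
        (Finset.add_sum_erase Finset.univ (fun k => B k (f k)) (Finset.mem_univ j)).symm
      have hsplit_g : ∑ k, B k (g' k)
          = B j (f j) + ∑ k ∈ Finset.univ.erase j, B k (g k) := by
        rw [← Finset.add_sum_erase Finset.univ (fun k => B k (g' k)) (Finset.mem_univ j)]
        have h1 : B j (g' j) = B j (f j) := by simp [hg']
        have h2 : ∑ k ∈ Finset.univ.erase j, B k (g' k)
            = ∑ k ∈ Finset.univ.erase j, B k (g k) := by
          apply Finset.sum_congr rfl
          intro k hk
          rw [hg', Function.update_of_ne (Finset.mem_erase.mp hk).1]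
        rw [h1, h2]
      rw [hsplit_f, hsplit_g] at hroute
      linarith
  -- slope limit helper (left derivatives)
  have hslopeL : ∀ (F : ℝ → ℝ) (x d : ℝ), HasDerivWithinAt F d (Set.Iic x) x →
      Filter.Tendsto (fun y => (F y - F x) / (y - x)) (nhdsWithin x (Set.Iio x)) (nhds d) := by
    intro F x d h
    have h2 := hasDerivWithinAt_iff_tendsto_slope.mp h
    rw [Set.Iic_diff_right] at h2
    refine h2.congr fun y => ?_
    rw [slope_def_field]
  have hdeltaT : ∀ x : ℝ, Filter.Tendsto (fun δ : ℝ => x - δ)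
      (nhdsWithin 0 (Set.Ioi 0)) (nhdsWithin x (Set.Iio x)) := by
    intro x
    apply tendsto_nhdsWithin_of_tendsto_nhds_of_eventually_within
    · have h1 : Filter.Tendsto (fun δ : ℝ => x - δ) (nhds 0) (nhds (x - 0)) :=
        tendsto_const_nhds.sub Filter.tendsto_id
      rw [sub_zero] at h1
      exact h1.mono_left nhdsWithin_le_nhds
    · filter_upwards [self_mem_nhdsWithin] with δ hδ
      have : (0:ℝ) < δ := hδ
      simp only [Set.mem_Iio]
      linarith
  -- KEY LEMMA: marginal costs are ordered across relays
  have key : ∀ i j : Fin N, i ≠ j → 0 < f i → f j < Rs → lam i (f i) ≤ lam j (f j) := by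
    intro i j hij hfi hfj
    obtain ⟨Li, hLi⟩ := (hderivB i).2 (f i) ⟨hfi, hfRs i⟩
    have hu0pos : (0:ℝ) < Rs - f j := by linarith
    have hu0le : Rs - f j ≤ Rs := by linarith [hf0 j]
    obtain ⟨Mj, hMj⟩ := (hderivBhat j).2 (Rs - f j) ⟨hu0pos, hu0le⟩
    have hfiu0 : f i ≤ Rs - f j := by
      have := hpair i j hij
      linarith
    -- Claim A : lam i (f i) ≤ Li
    have hA : lam i (f i) ≤ Li := by
      have hTs := hslopeL (B i) (f i) Li hLi
      have hTlam : Filter.Tendsto (fun t => lam i t)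
          (nhdsWithin (f i) (Set.Iio (f i))) (nhds (lam i (f i))) := by
        have hc : ContinuousWithinAt (lam i) (Set.Icc 0 Rs) (f i) :=
          (hlam i).2.1 (f i) (hfIcc i)
        have hc2 : ContinuousWithinAt (lam i) (Set.Ioo 0 (f i)) (f i) :=
          hc.mono (fun x hx => ⟨le_of_lt hx.1, le_trans (le_of_lt hx.2) (hfRs i)⟩)
        have h3 := hc2.tendsto
        rwa [nhdsWithin_Ioo_eq_nhdsLT hfi] at h3
      refine le_of_tendsto_of_tendsto hTlam hTs ?_
      filter_upwards [Ioo_mem_nhdsLT hfi] with t ht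
      have htIcc : t ∈ Set.Icc (0:ℝ) Rs :=
        ⟨le_of_lt ht.1, le_trans (le_of_lt ht.2) (hfRs i)⟩
      have hm := hmax i t htIcc
      rw [← hfocal i t ⟨le_of_lt ht.1, le_of_lt ht.2⟩,
        ← hfocal i (f i) ⟨hf0 i, le_refl _⟩] at hm
      have hsub : (∫ r in (0:ℝ)..(f i), lam i r) - (∫ r in (0:ℝ)..t, lam i r)
          = ∫ r in t..(f i), lam i r :=
        intervalIntegral.integral_interval_sub_left
          (hint i 0 (f i) ⟨le_refl _, le_of_lt hRs⟩ (hfIcc i))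
          (hint i 0 t ⟨le_refl _, le_of_lt hRs⟩ htIcc)
      have hlb := hIlb i t (f i) (le_of_lt ht.1) (le_of_lt ht.2) (hfRs i)
      rw [le_div_iff_of_neg (by linarith [ht.2] : t - f i < 0)]
      have hr : lam i t * (t - f i) = -(lam i t * (f i - t)) := by ring
      linarith
    -- Claim C : Mj ≤ lam j (f j)
    have hC : Mj ≤ lam j (f j) := by
      have hTs := hslopeL (Bhat N B j) (Rs - f j) Mj hMj
      have hTlam : Filter.Tendsto (fun u => lam j (Rs - u))
          (nhdsWithin (Rs - f j) (Set.Iio (Rs - f j))) (nhds (lam j (f j))) := by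
        have hc : ContinuousWithinAt (lam j) (Set.Icc 0 Rs) (f j) :=
          (hlam j).2.1 (f j) (hfIcc j)
        have hmap : Filter.Tendsto (fun u : ℝ => Rs - u)
            (nhdsWithin (Rs - f j) (Set.Iio (Rs - f j))) (nhdsWithin (f j) (Set.Icc 0 Rs)) := by
          apply tendsto_nhdsWithin_of_tendsto_nhds_of_eventually_within
          · have h1 : Filter.Tendsto (fun u : ℝ => Rs - u) (nhds (Rs - f j))
                (nhds (Rs - (Rs - f j))) := tendsto_const_nhds.sub Filter.tendsto_id
            rw [show Rs - (Rs - f j) = f j by ring] at h1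
            exact h1.mono_left nhdsWithin_le_nhds
          · filter_upwards [Ioo_mem_nhdsLT hu0pos] with u hu
            exact ⟨by linarith [hu.2, hf0 j], by linarith [hu.1]⟩
        exact hc.tendsto.comp hmap
      refine le_of_tendsto_of_tendsto hTs hTlam ?_
      filter_upwards [Ioo_mem_nhdsLT hu0pos] with u hu
      have htIcc : Rs - u ∈ Set.Icc (0:ℝ) Rs :=
        ⟨by linarith [hu.2, hf0 j], by linarith [hu.1]⟩
      have hm := hmax j (Rs - u) htIcc
      rw [show Rs - (Rs - u) = u by ring] at hm
      have hfju : f j ≤ Rs - u := by linarith [hu.2]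
      have hsub : (∫ r in (0:ℝ)..(Rs - u), lam j r) - (∫ r in (0:ℝ)..(f j), lam j r)
          = ∫ r in (f j)..(Rs - u), lam j r :=
        intervalIntegral.integral_interval_sub_left
          (hint j 0 (Rs - u) ⟨le_refl _, le_of_lt hRs⟩ htIcc)
          (hint j 0 (f j) ⟨le_refl _, le_of_lt hRs⟩ (hfIcc j))
      have hub := hIub j (f j) (Rs - u) (hf0 j) hfju (by linarith [hu.1])
      rw [div_le_iff_of_neg (by linarith [hu.2] : u - (Rs - f j) < 0)]
      have hr : lam j (Rs - u) * (u - (Rs - f j))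
          = -(lam j (Rs - u) * ((Rs - u) - f j)) := by ring
      linarith
    -- Claim B : Li ≤ Mj
    have hB : Li ≤ Mj := by
      have hTi : Filter.Tendsto (fun δ : ℝ => (B i (f i - δ) - B i (f i)) / ((f i - δ) - f i))
          (nhdsWithin 0 (Set.Ioi 0)) (nhds Li) :=
        (hslopeL (B i) (f i) Li hLi).comp (hdeltaT (f i))
      have hTj : Filter.Tendsto (fun δ : ℝ =>
            (Bhat N B j ((Rs - f j) - δ) - Bhat N B j (Rs - f j)) / (((Rs - f j) - δ) - (Rs - f j)))
          (nhdsWithin 0 (Set.Ioi 0)) (nhds Mj) :=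
        (hslopeL (Bhat N B j) (Rs - f j) Mj hMj).comp (hdeltaT (Rs - f j))
      refine le_of_tendsto_of_tendsto hTi hTj ?_
      filter_upwards [Ioo_mem_nhdsGT hfi] with δ hδ
      -- hδ : δ ∈ Ioo 0 (f i)
      have hδ0 : (0:ℝ) < δ := hδ.1
      have hδfi : δ < f i := hδ.2
      -- the key inequality : Bhat j (u0 - δ) + (B i (f i) - B i (f i - δ)) ≤ Bhat j u0
      have hupper : Bhat N B j ((Rs - f j) - δ)
          ≤ (∑ k ∈ (Finset.univ.erase j).erase i, B k (f k)) + B i (f i - δ) := by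
        have h1 := hBhat_le j ((Rs - f j) - δ) (Function.update f i (f i - δ))
          (by
            intro k
            rcases eq_or_ne k i with rfl | hk
            · simp only [Function.update_self]; linarith
            · rw [Function.update_of_ne hk]; exact hf0 k)
          (by
            have hi_mem : i ∈ Finset.univ.erase j :=
              Finset.mem_erase.mpr ⟨hij, Finset.mem_univ i⟩
            rw [← Finset.add_sum_erase _ _ hi_mem]
            have h2 : ∑ k ∈ (Finset.univ.erase j).erase i,
                Function.update f i (f i - δ) k
                = ∑ k ∈ (Finset.univ.erase j).erase i, f k := by
              apply Finset.sum_congr rfl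
              intro k hk
              rw [Function.update_of_ne (Finset.mem_erase.mp hk).1]
            have h3 : f i + ∑ k ∈ (Finset.univ.erase j).erase i, f k
                = ∑ k ∈ Finset.univ.erase j, f k :=
              Finset.add_sum_erase _ _ hi_mem
            rw [Function.update_self, h2]
            rw [hsum_erase_f j] at h3
            linarith)
          (by linarith) (by linarith)
        have hi_mem : i ∈ Finset.univ.erase j :=
          Finset.mem_erase.mpr ⟨hij, Finset.mem_univ i⟩
        have h4 : ∑ k ∈ Finset.univ.erase j, B k (Function.update f i (f i - δ) k)
            = B i (f i - δ) + ∑ k ∈ (Finset.univ.erase j).erase i, B k (f k) := by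
          rw [← Finset.add_sum_erase _ (fun k => B k (Function.update f i (f i - δ) k)) hi_mem]
          congr 1
          · rw [Function.update_self]
          · apply Finset.sum_congr rfl
            intro k hk
            rw [Function.update_of_ne (Finset.mem_erase.mp hk).1]
        rw [h4] at h1
        linarith
      have hlower : (∑ k ∈ (Finset.univ.erase j).erase i, B k (f k)) + B i (f i)
          ≤ Bhat N B j (Rs - f j) := by
        have hi_mem : i ∈ Finset.univ.erase j :=
          Finset.mem_erase.mpr ⟨hij, Finset.mem_univ i⟩
        have h5 : B i (f i) + ∑ k ∈ (Finset.univ.erase j).erase i, B k (f k)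
            = ∑ k ∈ Finset.univ.erase j, B k (f k) :=
          Finset.add_sum_erase _ (fun k => B k (f k)) hi_mem
        have := hBhat_ge j
        linarith
      -- compare slopes
      have hden : ((f i - δ) - f i) = -δ := by ring
      have hden2 : (((Rs - f j) - δ) - (Rs - f j)) = -δ := by ring
      rw [hden, hden2, div_le_div_right_of_neg (by linarith : -δ < 0)]
      linarith
    linarith
  -- pick a relay with positive flow
  obtain ⟨i0, hi0⟩ : ∃ i0, 0 < f i0 := by
    by_contra h
    push_neg at h
    have : ∑ i, f i ≤ 0 := Finset.sum_nonpos (fun i _ => h i)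
    rw [hfsum] at this
    linarith
  have hμle : ∀ i, lam i0 (f i0) ≤ lam i (f i) := by
    intro i
    rcases eq_or_ne i0 i with rfl | hne
    · exact le_refl _
    · exact key i0 i hne hi0 (by have := hpair i0 i hne; linarith)
  have hμge : ∀ i, 0 < f i → lam i (f i) ≤ lam i0 (f i0) := by
    intro i hfi
    rcases eq_or_ne i i0 with rfl | hne
    · exact le_refl _
    · exact key i i0 hne hfi (by have := hpair i i0 hne; linarith)
  -- conclude social optimality
  refine ⟨⟨hf0, hfsum⟩, ?_⟩
  rintro g ⟨hg0, hgsum⟩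
  have hgRs : ∀ i, g i ≤ Rs := by
    intro i
    rw [← hgsum]
    exact Finset.single_le_sum (fun k _ => hg0 k) (Finset.mem_univ i)
  have per : ∀ i : Fin N, lam i0 (f i0) * (g i - f i)
      ≤ (∫ r in (0:ℝ)..(g i), lam i r) - ∫ r in (0:ℝ)..(f i), lam i r := by
    intro i
    have hsub : (∫ r in (0:ℝ)..(g i), lam i r) - (∫ r in (0:ℝ)..(f i), lam i r)
        = ∫ r in (f i)..(g i), lam i r :=
      intervalIntegral.integral_interval_sub_left
        (hint i 0 (g i) ⟨le_refl _, le_of_lt hRs⟩ ⟨hg0 i, hgRs i⟩)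
        (hint i 0 (f i) ⟨le_refl _, le_of_lt hRs⟩ (hfIcc i))
    rcases le_total (f i) (g i) with h | h
    · have hlb := hIlb i (f i) (g i) (hf0 i) h (hgRs i)
      have h2 : lam i0 (f i0) * (g i - f i) ≤ lam i (f i) * (g i - f i) :=
        mul_le_mul_of_nonneg_right (hμle i) (by linarith)
      linarith
    · rcases eq_or_lt_of_le h with heqq | hlt
      · rw [heqq, sub_self, mul_zero, sub_self]
      · have hfi : 0 < f i := lt_of_le_of_lt (hg0 i) hlt
        have hub := hIub i (g i) (f i) (hg0 i) h (hfRs i)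
        have hsym : (∫ r in (f i)..(g i), lam i r) = -∫ r in (g i)..(f i), lam i r :=
          intervalIntegral.integral_symm (g i) (f i)
        have h1 : lam i (f i) ≤ lam i0 (f i0) := hμge i hfi
        have h2 : lam i (f i) * (f i - g i) ≤ lam i0 (f i0) * (f i - g i) :=
          mul_le_mul_of_nonneg_right h1 (by linarith)
        have hr : lam i0 (f i0) * (g i - f i) = -(lam i0 (f i0) * (f i - g i)) := by ring
        linarith
  have hsumper := Finset.sum_le_sum (fun i (_ : i ∈ Finset.univ) => per i)
  have hL : ∑ i, lam i0 (f i0) * (g i - f i) = 0 := by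
    rw [← Finset.mul_sum, Finset.sum_sub_distrib, hgsum, hfsum]
    ring
  have hR : ∑ i, ((∫ r in (0:ℝ)..(g i), lam i r) - ∫ r in (0:ℝ)..(f i), lam i r)
      = (∑ i, ∫ r in (0:ℝ)..(g i), lam i r) - ∑ i, ∫ r in (0:ℝ)..(f i), lam i r :=
    Finset.sum_sub_distrib ..
  rw [hL, hR] at hsumper
  unfold totalCost
  linarith
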